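/- arXiv:1206.0992 — 4 statements merged into one kernel-verified Lean document; each statement's English description precedes it below -/
import Mathlib

section
/- Let n = 2^m + r with integers m ≥ 0 and 0 ≤ r < 2^m. Then any matrices P_0, …, P_{t−1} ∈ 𝓜_n^♮ (t ≥ 1) whose product P_{t−1}⋯P_0 has all rows equal (equivalently, rank 1) satisfy Σ_{k=0}^{t−1} ‖I_n − P_k‖_1 ≥ m·n + 2r. -/
open Matrix

/-- The symmetric gossip matrix `M_{ij} = I - (e_i - e_j)(e_i - e_j)^T / 2`. -/
noncomputable def gossipM (n : ℕ) (i j : Fin n) : Matrix (Fin n) (Fin n) ℝ :=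
  1 - (1 / 2 : ℝ) • vecMulVec (Pi.single i 1 - Pi.single j 1) (Pi.single i 1 - Pi.single j 1)

/-- The asymmetric gossip matrix `I - e_i (e_i - e_j)^T / 2`. -/
noncomputable def gossipA (n : ℕ) (i j : Fin n) : Matrix (Fin n) (Fin n) ℝ :=
  1 - (1 / 2 : ℝ) • vecMulVec (Pi.single i 1) (Pi.single i 1 - Pi.single j 1)

/-- Membership in the set `𝓜_n^♮` of (symmetric or asymmetric) gossip matrices. -/
def memAsym (n : ℕ) (P : Matrix (Fin n) (Fin n) ℝ) : Prop :=
  ∃ i j, P = gossipM n i j ∨ P = gossipA n i j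

lemma mulA (n : ℕ) (Q : Matrix (Fin n) (Fin n) ℝ) (i j a b : Fin n) :
    (Q * gossipA n i j) a b
      = Q a b - 1/2 * Q a i * ((if b = i then (1:ℝ) else 0) - (if b = j then 1 else 0)) := by
  simp [gossipA, Matrix.mul_sub, Matrix.sub_apply, Matrix.mul_smul, Matrix.smul_apply,
    Matrix.mul_apply, Matrix.one_apply, vecMulVec_apply, Pi.single_apply, Pi.sub_apply,
    ite_mul, mul_ite, mul_add, mul_sub, sub_mul, Finset.sum_add_distrib, Finset.sum_sub_distrib,
    Finset.sum_ite_eq', mul_comm, mul_assoc]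

lemma mulM (n : ℕ) (Q : Matrix (Fin n) (Fin n) ℝ) (i j a b : Fin n) :
    (Q * gossipM n i j) a b
      = Q a b - 1/2 * (Q a i - Q a j) * ((if b = i then (1:ℝ) else 0) - (if b = j then 1 else 0)) := by
  simp [gossipM, Matrix.mul_sub, Matrix.sub_apply, Matrix.mul_smul, Matrix.smul_apply,
    Matrix.mul_apply, Matrix.one_apply, vecMulVec_apply, Pi.single_apply, Pi.sub_apply,
    ite_mul, mul_ite, mul_add, sub_mul, mul_sub, Finset.sum_add_distrib, Finset.sum_sub_distrib,
    Finset.sum_ite_eq', mul_comm, mul_assoc]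

lemma gossipA_self (n : ℕ) (i : Fin n) : gossipA n i i = 1 := by
  ext a b; simp [gossipA, vecMulVec_apply]

lemma gossipM_self (n : ℕ) (i : Fin n) : gossipM n i i = 1 := by
  ext a b; simp [gossipM, vecMulVec_apply]

lemma subA (n : ℕ) (i j a b : Fin n) :
    (1 - gossipA n i j) a b
      = 1/2 * (if a = i then (1:ℝ) else 0) * ((if b = i then (1:ℝ) else 0) - (if b = j then 1 else 0)) := by
  simp [gossipA, Matrix.sub_apply, Matrix.smul_apply, vecMulVec_apply, Pi.single_apply,
    Pi.sub_apply]

lemma subM (n : ℕ) (i j a b : Fin n) :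
    (1 - gossipM n i j) a b
      = 1/2 * ((if a = i then (1:ℝ) else 0) - (if a = j then 1 else 0))
        * ((if b = i then (1:ℝ) else 0) - (if b = j then 1 else 0)) := by
  simp [gossipM, Matrix.sub_apply, Matrix.smul_apply, vecMulVec_apply, Pi.single_apply,
    Pi.sub_apply]
  ring

lemma inner_ge (n : ℕ) (i j : Fin n) (hij : i ≠ j) (f : Fin n → ℝ) (hf : ∀ b, 0 ≤ f b) :
    f i + f j ≤ ∑ b, f b := by
  have := Finset.sum_le_sum_of_subset_of_nonneg (s := ({i, j} : Finset (Fin n)))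
    (t := Finset.univ) (f := f) (by simp) (fun b _ _ => hf b)
  rwa [Finset.sum_pair hij] at this

lemma costA (n : ℕ) (i j : Fin n) (hij : i ≠ j) :
    1 ≤ ∑ a, ∑ b, |(1 - gossipA n i j) a b| := by
  have h1 : ∀ a : Fin n, (0:ℝ) ≤ ∑ b, |(1 - gossipA n i j) a b| :=
    fun a => Finset.sum_nonneg fun b _ => abs_nonneg _
  have h2 : (∑ b, |(1 - gossipA n i j) i b|) ≤ ∑ a, ∑ b, |(1 - gossipA n i j) a b| :=
    Finset.single_le_sum (fun a _ => h1 a) (Finset.mem_univ i)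
  refine le_trans (le_trans ?_ (inner_ge n i j hij (fun b => |(1 - gossipA n i j) i b|)
    (fun b => abs_nonneg _))) h2
  show 1 ≤ |(1 - gossipA n i j) i i| + |(1 - gossipA n i j) i j|
  rw [subA, subA]
  simp [hij, hij.symm]
  norm_num

lemma costM (n : ℕ) (i j : Fin n) (hij : i ≠ j) :
    2 ≤ ∑ a, ∑ b, |(1 - gossipM n i j) a b| := by
  have h1 : ∀ a : Fin n, (0:ℝ) ≤ ∑ b, |(1 - gossipM n i j) a b| :=
    fun a => Finset.sum_nonneg fun b _ => abs_nonneg _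
  have h2 : (∑ b, |(1 - gossipM n i j) i b|) + (∑ b, |(1 - gossipM n i j) j b|)
      ≤ ∑ a, ∑ b, |(1 - gossipM n i j) a b| :=
    inner_ge n i j hij _ h1
  have h3 : |(1 - gossipM n i j) i i| + |(1 - gossipM n i j) i j|
      ≤ ∑ b, |(1 - gossipM n i j) i b| := inner_ge n i j hij _ (fun b => abs_nonneg _)
  have h4 : |(1 - gossipM n i j) j i| + |(1 - gossipM n i j) j j|
      ≤ ∑ b, |(1 - gossipM n i j) j b| := inner_ge n i j hij _ (fun b => abs_nonneg _)
  have h5 : (2:ℝ) ≤ (|(1 - gossipM n i j) i i| + |(1 - gossipM n i j) i j|)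
      + (|(1 - gossipM n i j) j i| + |(1 - gossipM n i j) j j|) := by
    rw [subM, subM, subM, subM]
    simp [hij, hij.symm]
    norm_num
  linarith

lemma kraft_point (m k : ℕ) : (m:ℝ) + 2 - 2^(m+1) * ((2:ℝ)^k)⁻¹ ≤ k := by
  rcases le_or_gt k (m+1) with h | h
  · have hd : m + 1 - k + k = m + 1 := by omega
    have h2 : (2:ℝ)^(m+1) = 2^(m+1-k) * 2^k := by rw [← pow_add, hd]
    rw [h2, mul_assoc, mul_inv_cancel₀ (pow_ne_zero _ two_ne_zero), mul_one]
    have : (m + 1 - k + 1 : ℕ) ≤ 2^(m+1-k) := Nat.lt_two_pow_self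
    have h6 := (Nat.cast_le (α := ℝ)).2 this
    have h7 : ((2:ℕ):ℝ)^(m+1-k) = (2:ℝ)^(m+1-k) := by norm_num
    have hk : (k:ℝ) ≤ m + 1 := by exact_mod_cast h
    have h3 : ((m+1-k:ℕ):ℝ) = (m:ℝ) + 1 - k := by
      rw [Nat.cast_sub h]; push_cast; ring
    push_cast at h6
    rw [h3] at h6
    linarith
  · have ha : (m:ℝ) + 2 ≤ k := by exact_mod_cast h
    have hb : (0:ℝ) ≤ 2^(m+1) * ((2:ℝ)^k)⁻¹ := by positivity
    linarith

lemma kraft (m r n : ℕ) (hr : r < 2 ^ m) (hn : n = 2 ^ m + r) (c : Fin n → ℕ)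
    (h : ∑ i, ((2:ℝ)^(c i))⁻¹ ≤ 1) : ((m * n + 2 * r : ℕ) : ℝ) ≤ ∑ i, (c i : ℝ) := by
  subst hn
  have h1 : ∀ i, (m:ℝ) + 2 - 2^(m+1) * ((2:ℝ)^(c i))⁻¹ ≤ c i := fun i => kraft_point m (c i)
  have h2 := Finset.sum_le_sum (fun i (_ : i ∈ Finset.univ) => h1 i)
  rw [Finset.sum_sub_distrib, ← Finset.mul_sum, Finset.sum_const, nsmul_eq_mul] at h2
  have h3 : (2:ℝ)^(m+1) * (∑ i, ((2:ℝ)^(c i))⁻¹) ≤ 2^(m+1) * 1 :=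
    mul_le_mul_of_nonneg_left h (by positivity)
  have hcard : (Finset.univ : Finset (Fin (2^m+r))).card = 2^m + r := by simp
  rw [hcard] at h2
  have key : ((m * (2^m+r) + 2 * r : ℕ) : ℝ)
      = ((2^m+r : ℕ):ℝ) * ((m:ℝ) + 2) - 2^(m+1) * 1 := by
    push_cast
    ring
  rw [key]
  have hc : (((2:ℕ)^m+r : ℕ):ℝ) = ((2^m+r : ℕ):ℝ) := by norm_num
  calc ((2^m+r : ℕ):ℝ) * ((m:ℝ) + 2) - 2^(m+1) * 1
      ≤ ((2^m+r : ℕ):ℝ) * ((m:ℝ) + 2) - 2^(m+1) * (∑ i, ((2:ℝ)^(c i))⁻¹) := by linarith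
    _ ≤ ∑ i, (c i : ℝ) := by rw [hc] at h2; exact h2

lemma key (n : ℕ) (L : List (Matrix (Fin n) (Fin n) ℝ)) (hL : ∀ A ∈ L, memAsym n A) :
    ∃ c : Fin n → ℕ,
      (∀ a b, 0 ≤ L.reverse.prod a b) ∧
      (∀ a, ∑ b, L.reverse.prod a b = 1) ∧
      (∀ a, ((2:ℝ) ^ (c a))⁻¹ ≤ L.reverse.prod a a) ∧
      ((∑ a, (c a : ℝ)) ≤ (L.map (fun A => ∑ i, ∑ j, |(1 - A) i j|)).sum) := by
  induction L with
  | nil =>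
    refine ⟨0, ?_, ?_, ?_, ?_⟩
    · intro a b
      rw [List.reverse_nil, List.prod_nil, Matrix.one_apply]
      split_ifs <;> norm_num
    · intro a
      simp [Matrix.one_apply]
    · intro a
      simp [Matrix.one_apply]
    · simp
  | cons A L ih =>
    obtain ⟨c, hpos, hrow, hdiag, hcost⟩ := ih (fun B hB => hL B (List.mem_cons_of_mem A hB))
    have hprod : (A :: L).reverse.prod = L.reverse.prod * A := by
      rw [List.reverse_cons, List.prod_append, List.prod_singleton]
    set Q := L.reverse.prod with hQ
    have hAcost : (0:ℝ) ≤ ∑ i, ∑ j, |(1 - A) i j| :=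
      Finset.sum_nonneg fun i _ => Finset.sum_nonneg fun j _ => abs_nonneg _
    obtain ⟨i, j, hM | hA⟩ := hL A List.mem_cons_self
    · -- symmetric case
      rcases eq_or_ne i j with rfl | hij
      · rw [gossipM_self] at hM
        subst hM
        rw [hprod, mul_one]
        refine ⟨c, hpos, hrow, hdiag, ?_⟩
        rw [List.map_cons, List.sum_cons]
        linarith
      · subst hM
        refine ⟨fun a => c a + ((if a = i then 1 else 0) + (if a = j then 1 else 0)), ?_, ?_, ?_, ?_⟩
        · intro a b
          rw [hprod, mulM]
          rcases eq_or_ne b i with rfl | hbi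
          · simp [hij]
            linarith [hpos a b, hpos a j]
          · rcases eq_or_ne b j with rfl | hbj
            · simp [hbi]
              linarith [hpos a b, hpos a i]
            · simp [hbi, hbj]
              exact hpos a b
        · intro a
          rw [hprod]
          simp only [mulM]
          rw [Finset.sum_sub_distrib, hrow a, ← Finset.mul_sum, Finset.sum_sub_distrib]
          simp
        · intro a
          rw [hprod, mulM]
          by_cases hai : a = i
          · subst hai
            simp [hij, pow_succ, mul_inv]
            linarith [hdiag a, hpos a j]
          · by_cases haj : a = j
            · subst haj
              simp [hai, pow_succ, mul_inv]
              linarith [hdiag a, hpos a i]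
            · simp [hai, haj]
              exact hdiag a
        · rw [List.map_cons, List.sum_cons]
          push_cast
          rw [Finset.sum_add_distrib, Finset.sum_add_distrib]
          simp only [Finset.sum_ite_eq', Finset.mem_univ, if_true]
          have := costM n i j hij
          linarith
    · -- asymmetric case
      rcases eq_or_ne i j with rfl | hij
      · rw [gossipA_self] at hA
        subst hA
        rw [hprod, mul_one]
        refine ⟨c, hpos, hrow, hdiag, ?_⟩
        rw [List.map_cons, List.sum_cons]
        linarith
      · subst hA
        refine ⟨fun a => c a + (if a = i then 1 else 0), ?_, ?_, ?_, ?_⟩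
        · intro a b
          rw [hprod, mulA]
          rcases eq_or_ne b i with rfl | hbi
          · simp [hij]
            linarith [hpos a b]
          · rcases eq_or_ne b j with rfl | hbj
            · simp [hbi]
              linarith [hpos a b, hpos a i]
            · simp [hbi, hbj]
              exact hpos a b
        · intro a
          rw [hprod]
          simp only [mulA]
          rw [Finset.sum_sub_distrib, hrow a, ← Finset.mul_sum, Finset.sum_sub_distrib]
          simp
        · intro a
          rw [hprod, mulA]
          by_cases hai : a = i
          · subst hai
            simp [hij, pow_succ, mul_inv]
            linarith [hdiag a]
          · by_cases haj : a = j
            · subst haj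
              simp [hai]
              linarith [hdiag a, hpos a i]
            · simp [hai, haj]
              exact hdiag a
        · rw [List.map_cons, List.sum_cons]
          push_cast
          rw [Finset.sum_add_distrib]
          simp only [Finset.sum_ite_eq', Finset.mem_univ, if_true]
          have := costA n i j hij
          linarith

theorem stmt_10 (m r n : ℕ) (hr : r < 2 ^ m) (hn : n = 2 ^ m + r) (t : ℕ) (ht : 1 ≤ t)
    (P : Fin t → Matrix (Fin n) (Fin n) ℝ)
    (hP : ∀ k, memAsym n (P k))
    (hrows : ∀ i i' : Fin n, ((List.ofFn P).reverse.prod) i = ((List.ofFn P).reverse.prod) i') :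
    ((m * n + 2 * r : ℕ) : ℝ) ≤ ∑ k, ∑ i, ∑ j, |(1 - P k) i j| := by
  have hL : ∀ A ∈ List.ofFn P, memAsym n A := by
    intro A hA
    rw [List.mem_ofFn] at hA
    obtain ⟨k, rfl⟩ := hA
    exact hP k
  obtain ⟨c, hpos, hrow, hdiag, hcost⟩ := key n (List.ofFn P) hL
  have hnpos : 0 < n := by
    have : 0 < 2 ^ m := Nat.pow_pos (by norm_num)
    omega
  set Q := (List.ofFn P).reverse.prod with hQ
  let i0 : Fin n := ⟨0, hnpos⟩
  have hsum : ∑ i, ((2:ℝ) ^ (c i))⁻¹ ≤ 1 := by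
    calc ∑ i, ((2:ℝ) ^ (c i))⁻¹ ≤ ∑ i, Q i0 i := by
          refine Finset.sum_le_sum fun i _ => ?_
          have h1 : Q i i = Q i0 i := congrFun (hrows i i0) i
          rw [← h1]
          exact hdiag i
      _ = 1 := hrow i0
  have h2 := kraft m r n hr hn c hsum
  refine le_trans h2 (le_trans hcost ?_)
  rw [List.map_ofFn, List.sum_ofFn]
  simp [Function.comp]
end

section
/- Let n = 2^m + r with integers m ≥ 1 and 0 ≤ r < 2^m. Then there exist an integer t ≥ 1 and matrices P_0, …, P_{t−1} ∈ 𝓜_n^♮ with Σ_{k=0}^{t−1} ‖I_n − P_k‖_1 = m·n + 2r and P_{t−1}⋯P_0 = 1·β^T, where β ∈ ℝ^n is given (after a suitable relabeling of the nodes) by β_i = 1/2^m for i = 1, …, n − 2r and β_i = 1/2^{m+1} for i = n − 2r + 1, …, n. -/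
open Matrix

/- ### Auxiliary lemmas -/

noncomputable def costVal {n : ℕ} (P : Matrix (Fin n) (Fin n) ℝ) : ℝ :=
  ∑ i, ∑ j, |(1 - P) i j|

lemma gossipA_apply (n : ℕ) (i j a b : Fin n) :
    gossipA n i j a b = (if a = b then (1:ℝ) else 0)
      - (if a = i then (1:ℝ)/2 else 0) * ((if b = i then (1:ℝ) else 0) - (if b = j then 1 else 0)) := by
  simp only [gossipA, Matrix.sub_apply, Matrix.smul_apply, Matrix.one_apply,
    vecMulVec_apply, Pi.sub_apply, Pi.single_apply, smul_eq_mul]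
  split_ifs <;> ring

lemma gossipM_apply (n : ℕ) (i j a b : Fin n) :
    gossipM n i j a b = (if a = b then (1:ℝ) else 0)
      - (1/2) * ((if a = i then (1:ℝ) else 0) - (if a = j then 1 else 0))
        * ((if b = i then (1:ℝ) else 0) - (if b = j then 1 else 0)) := by
  simp only [gossipM, Matrix.sub_apply, Matrix.smul_apply, Matrix.one_apply,
    vecMulVec_apply, Pi.sub_apply, Pi.single_apply, smul_eq_mul]
  split_ifs <;> ring

lemma gossipA_mul (n : ℕ) (i j : Fin n) (Q : Matrix (Fin n) (Fin n) ℝ) (a b : Fin n) :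
    (gossipA n i j * Q) a b = if a = i then (Q i b + Q j b)/2 else Q a b := by
  rw [Matrix.mul_apply]
  simp only [gossipA_apply, sub_mul, ite_mul, one_mul, zero_mul, mul_sub, mul_ite, mul_one, mul_zero]
  rw [Finset.sum_sub_distrib]
  rw [Finset.sum_ite_eq, if_pos (Finset.mem_univ a)]
  by_cases h : a = i
  · simp only [h, if_true]
    rw [Finset.sum_sub_distrib, Finset.sum_ite_eq', Finset.sum_ite_eq', if_pos (Finset.mem_univ i),
      if_pos (Finset.mem_univ j)]
    ring
  · simp only [h, if_false]
    simp

lemma gossipM_mul (n : ℕ) (i j : Fin n) (Q : Matrix (Fin n) (Fin n) ℝ) (a b : Fin n) :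
    (gossipM n i j * Q) a b = if a = i then (Q i b + Q j b)/2
      else if a = j then (Q i b + Q j b)/2 else Q a b := by
  rw [Matrix.mul_apply]
  simp only [gossipM_apply, sub_mul, ite_mul, one_mul, zero_mul, mul_sub, mul_ite, mul_one, mul_zero]
  rw [Finset.sum_sub_distrib, Finset.sum_ite_eq, if_pos (Finset.mem_univ a),
    Finset.sum_sub_distrib, Finset.sum_ite_eq', Finset.sum_ite_eq',
    if_pos (Finset.mem_univ i), if_pos (Finset.mem_univ j)]
  by_cases h1 : a = i <;> by_cases h2 : a = j
  · have hij : i = j := h1.symm.trans h2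
    simp [h1, h2, hij]
  · have hij : ¬ i = j := fun e => h2 (h1.trans e)
    simp [h1, h2, hij]; ring
  · have hij : ¬ j = i := fun e => h1 (h2.trans e)
    simp [h1, h2, hij]; ring
  · simp [h1, h2]

lemma sum_abs_single_sub (n : ℕ) (i j : Fin n) (h : i ≠ j) :
    ∑ b : Fin n, |((Pi.single i 1 - Pi.single j 1 : Fin n → ℝ)) b| = 2 := by
  have : ∀ b : Fin n, |((Pi.single i 1 - Pi.single j 1 : Fin n → ℝ)) b|
      = (if b = i then (1:ℝ) else 0) + (if b = j then 1 else 0) := by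
    intro b
    simp only [Pi.sub_apply, Pi.single_apply]
    by_cases h1 : b = i <;> by_cases h2 : b = j
    · exact absurd (h1.symm.trans h2) h
    · simp [h1, h2, h]
    · simp [h1, h2, Ne.symm h]
    · simp [h1, h2]
  rw [Finset.sum_congr rfl fun b _ => this b, Finset.sum_add_distrib,
    Finset.sum_ite_eq', Finset.sum_ite_eq', if_pos (Finset.mem_univ i), if_pos (Finset.mem_univ j)]
  norm_num

lemma sum_abs_single (n : ℕ) (i : Fin n) :
    ∑ b : Fin n, |((Pi.single i 1 : Fin n → ℝ)) b| = 1 := by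
  have : ∀ b : Fin n, |((Pi.single i 1 : Fin n → ℝ)) b| = (if b = i then (1:ℝ) else 0) := by
    intro b; simp only [Pi.single_apply]; split_ifs <;> simp
  rw [Finset.sum_congr rfl fun b _ => this b, Finset.sum_ite_eq', if_pos (Finset.mem_univ i)]

lemma costVal_vmv {n : ℕ} (u v : Fin n → ℝ) :
    ∑ a : Fin n, ∑ b : Fin n, |((1/2 : ℝ) • vecMulVec u v) a b|
      = (1/2) * (∑ a, |u a|) * (∑ b, |v b|) := by
  have : ∀ a b : Fin n, |((1/2 : ℝ) • vecMulVec u v) a b| = (1/2) * (|u a| * |v b|) := by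
    intro a b
    simp only [Matrix.smul_apply, vecMulVec_apply, smul_eq_mul, abs_mul]
    norm_num
  rw [Finset.sum_congr rfl fun a _ => Finset.sum_congr rfl fun b _ => this a b]
  simp only [← Finset.mul_sum, ← Finset.sum_mul]
  ring

lemma costVal_gossipM {n : ℕ} (i j : Fin n) (h : i ≠ j) : costVal (gossipM n i j) = 2 := by
  have h1 : (1 : Matrix (Fin n) (Fin n) ℝ) - gossipM n i j
      = (1/2 : ℝ) • vecMulVec (Pi.single i 1 - Pi.single j 1) (Pi.single i 1 - Pi.single j 1) := by
    simp [gossipM]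
  rw [costVal, h1, costVal_vmv, sum_abs_single_sub n i j h]
  norm_num

lemma costVal_gossipA {n : ℕ} (i j : Fin n) (h : i ≠ j) : costVal (gossipA n i j) = 1 := by
  have h1 : (1 : Matrix (Fin n) (Fin n) ℝ) - gossipA n i j
      = (1/2 : ℝ) • vecMulVec (Pi.single i 1) (Pi.single i 1 - Pi.single j 1) := by
    simp [gossipA]
  rw [costVal, h1, costVal_vmv, sum_abs_single_sub n i j h, sum_abs_single]
  norm_num

lemma costVal_gossipM_self {n : ℕ} (i : Fin n) : costVal (gossipM n i i) = 0 := by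
  rw [gossipM_self]
  simp [costVal]

/- ### pull stages -/

noncomputable def pullsSide (n : ℕ) (src : Fin n) (lo' : ℕ) :
    (cnt : ℕ) → (h : lo' + cnt ≤ n) → List (Matrix (Fin n) (Fin n) ℝ)
  | 0, _ => []
  | (k+1), h => gossipA n ⟨lo' + k, by omega⟩ src :: pullsSide n src lo' k (by omega)

lemma pullsSide_mem (n : ℕ) (src : Fin n) (lo' : ℕ) :
    ∀ (cnt : ℕ) (h : lo' + cnt ≤ n) (P : Matrix (Fin n) (Fin n) ℝ),
      P ∈ pullsSide n src lo' cnt h → ∃ c, P = gossipA n c src := by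
  intro cnt
  induction cnt with
  | zero => intro h P hP; simp [pullsSide] at hP
  | succ k ih =>
    intro h P hP
    rw [pullsSide, List.mem_cons] at hP
    rcases hP with hP | hP
    · exact ⟨_, hP⟩
    · exact ih _ P hP

lemma pullsSide_cost (n : ℕ) (src : Fin n) (lo' : ℕ) :
    ∀ (cnt : ℕ) (h : lo' + cnt ≤ n), ((src : ℕ) < lo' ∨ lo' + cnt ≤ (src : ℕ)) →
      ((pullsSide n src lo' cnt h).map costVal).sum = (cnt : ℝ) := by
  intro cnt
  induction cnt with
  | zero => intro h _; simp [pullsSide]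
  | succ k ih =>
    intro h hsrc
    rw [pullsSide, List.map_cons, List.sum_cons, ih _ (by omega),
      costVal_gossipA _ _ (by intro e; have := congrArg Fin.val e; simp at this; omega)]
    push_cast; ring

lemma pullsSide_prod_mul (n : ℕ) (src : Fin n) (lo' : ℕ) :
    ∀ (cnt : ℕ) (h : lo' + cnt ≤ n), ((src : ℕ) < lo' ∨ lo' + cnt ≤ (src : ℕ)) →
    ∀ Q : Matrix (Fin n) (Fin n) ℝ,
      (pullsSide n src lo' cnt h).prod * Q
        = Matrix.of fun i j : Fin n =>
            if lo' ≤ (i : ℕ) ∧ (i : ℕ) < lo' + cnt then (Q i j + Q src j)/2 else Q i j := by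
  intro cnt
  induction cnt with
  | zero =>
    intro h _ Q
    ext i j
    simp only [pullsSide, List.prod_nil, Matrix.one_mul, Matrix.of_apply]
    rw [if_neg (by omega)]
  | succ k ih =>
    intro h hsrc Q
    rw [pullsSide, List.prod_cons, mul_assoc, ih _ (by omega) Q]
    ext i j
    rw [gossipA_mul]
    by_cases hik : i = (⟨lo' + k, by omega⟩ : Fin n)
    · have hiv : (i : ℕ) = lo' + k := by rw [hik]
      simp only [Matrix.of_apply, if_pos hik]
      rw [if_neg (by omega), if_neg (by rcases hsrc with h' | h' <;> omega),
        if_pos (by omega), ← hik]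
    · have hiv : (i : ℕ) ≠ lo' + k := by
        intro e; exact hik (Fin.ext e)
      simp only [Matrix.of_apply, if_neg hik]
      by_cases hin : lo' ≤ (i : ℕ) ∧ (i : ℕ) < lo' + k
      · rw [if_pos hin, if_pos (by omega)]
      · rw [if_neg hin, if_neg (by omega)]

/- ### target matrices -/

noncomputable def bval (lo m' r' : ℕ) (j : ℕ) : ℝ :=
  if lo ≤ j ∧ j < lo + 2 ^ m' + r' then
    (if j + r' < lo + 2 ^ m' then ((2 : ℝ) ^ m')⁻¹ else ((2 : ℝ) ^ (m' + 1))⁻¹)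
  else 0

noncomputable def tgt (n lo m' r' : ℕ) : Matrix (Fin n) (Fin n) ℝ :=
  Matrix.of fun i j : Fin n =>
    if lo ≤ (i : ℕ) ∧ (i : ℕ) < lo + 2 ^ m' + r' then bval lo m' r' (j : ℕ)
    else if i = j then 1 else 0

noncomputable def Dmat (n lo M rA rB : ℕ) : Matrix (Fin n) (Fin n) ℝ :=
  Matrix.of fun i j : Fin n =>
    if lo ≤ (i : ℕ) ∧ (i : ℕ) < lo + 2 ^ M + rA then bval lo M rA (j : ℕ)
    else if lo + 2 ^ M + rA ≤ (i : ℕ) ∧ (i : ℕ) < lo + 2 ^ M + rA + 2 ^ M + rB then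
      bval (lo + 2 ^ M + rA) M rB (j : ℕ)
    else if i = j then 1 else 0

lemma bval_out {lo m' r' j : ℕ} (h : ¬(lo ≤ j ∧ j < lo + 2 ^ m' + r')) :
    bval lo m' r' j = 0 := by
  rw [bval, if_neg h]

lemma tgt_mul_tgt (n lo M rA rB : ℕ) :
    tgt n (lo + 2 ^ M + rA) M rB * tgt n lo M rA = Dmat n lo M rA rB := by
  ext i j
  rw [Matrix.mul_apply]
  by_cases hi : lo + 2 ^ M + rA ≤ (i : ℕ) ∧ (i : ℕ) < lo + 2 ^ M + rA + 2 ^ M + rB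
  · have hrow : ∀ k : Fin n, tgt n (lo + 2 ^ M + rA) M rB i k
        = bval (lo + 2 ^ M + rA) M rB (k : ℕ) := by
      intro k; simp only [tgt, Matrix.of_apply, if_pos hi]
    rw [Finset.sum_eq_single_of_mem j (Finset.mem_univ j) ?_]
    · rw [hrow]
      by_cases hj : lo ≤ (j : ℕ) ∧ (j : ℕ) < lo + 2 ^ M + rA
      · have hz : bval (lo + 2 ^ M + rA) M rB (j : ℕ) = 0 := bval_out (by omega)
        rw [hz, zero_mul]
        simp only [Dmat, Matrix.of_apply, if_neg (show ¬(lo ≤ (i:ℕ) ∧ (i:ℕ) < lo + 2^M + rA) by omega),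
          if_pos hi, hz]
      · have : tgt n lo M rA j j = 1 := by
          simp only [tgt, Matrix.of_apply, if_neg hj]; simp
        rw [this, mul_one]
        simp only [Dmat, Matrix.of_apply, if_neg (show ¬(lo ≤ (i:ℕ) ∧ (i:ℕ) < lo + 2^M + rA) by omega),
          if_pos hi]
    · intro k _ hkj
      rw [hrow]
      by_cases hk : lo ≤ (k : ℕ) ∧ (k : ℕ) < lo + 2 ^ M + rA
      · rw [bval_out (by omega), zero_mul]
      · have : tgt n lo M rA k j = 0 := by
          simp only [tgt, Matrix.of_apply, if_neg hk, if_neg hkj]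
        rw [this, mul_zero]
  · have hrow : ∀ k : Fin n, tgt n (lo + 2 ^ M + rA) M rB i k
        = if i = k then 1 else 0 := by
      intro k; simp only [tgt, Matrix.of_apply, if_neg hi]
    simp only [hrow, ite_mul, one_mul, zero_mul, Finset.sum_ite_eq, Finset.mem_univ, if_true]
    simp only [tgt, Dmat, Matrix.of_apply]
    by_cases hiA : lo ≤ (i : ℕ) ∧ (i : ℕ) < lo + 2 ^ M + rA
    · rw [if_pos hiA, if_pos hiA]
    · rw [if_neg hiA, if_neg hiA, if_neg hi]

lemma bval_avg (lo M rA rB : ℕ) (hA : rA ≤ 2 ^ M) (hB : rB ≤ 2 ^ M)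
    (hcase : rA = 0 ∨ rB = 2 ^ M) (j : ℕ) :
    (bval lo M rA j + bval (lo + 2 ^ M + rA) M rB j) / 2 = bval lo (M + 1) (rA + rB) j := by
  have e1 : ((2:ℝ) ^ (M+1)) = ((2:ℝ) ^ M) * 2 := by rw [pow_succ]
  have e2 : ((2:ℝ) ^ (M+1+1)) = ((2:ℝ) ^ (M+1)) * 2 := by rw [pow_succ]
  have h2 : (2:ℕ) ^ (M+1) = 2 ^ M + 2 ^ M := by rw [pow_succ]; omega
  rcases hcase with hc | hc
  · subst hc
    simp only [bval, h2]
    split_ifs <;>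
      first
        | omega
        | (field_simp [e1, e2]; try ring)
  · subst hc
    simp only [bval, h2]
    split_ifs <;>
      first
        | omega
        | (field_simp [e1, e2]; try ring)

noncomputable def E1mat (n lo M rA rB : ℕ) : Matrix (Fin n) (Fin n) ℝ :=
  Matrix.of fun i j : Fin n =>
    if lo + 2 ^ M + rA + 1 ≤ (i : ℕ) ∧ (i : ℕ) < lo + 2 ^ M + rA + 2 ^ M + rB then
      (bval (lo + 2 ^ M + rA) M rB (j : ℕ) + bval lo M rA (j : ℕ)) / 2
    else Dmat n lo M rA rB i j

noncomputable def E2mat (n lo M rA rB : ℕ) : Matrix (Fin n) (Fin n) ℝ :=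
  Matrix.of fun i j : Fin n =>
    if lo + 1 ≤ (i : ℕ) ∧ (i : ℕ) < lo + 2 ^ M + rA then
      (bval lo M rA (j : ℕ) + bval (lo + 2 ^ M + rA) M rB (j : ℕ)) / 2
    else E1mat n lo M rA rB i j

lemma Dmat_a (n lo M rA rB : ℕ) (h1 : lo < n) (hp : 1 ≤ 2 ^ M) (j : Fin n) :
    Dmat n lo M rA rB ⟨lo, h1⟩ j = bval lo M rA (j : ℕ) := by
  have hva : ((⟨lo, h1⟩ : Fin n) : ℕ) = lo := rfl
  simp only [Dmat, Matrix.of_apply, hva]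
  rw [if_pos (by omega)]

lemma Dmat_b (n lo M rA rB : ℕ) (h2b : lo + 2 ^ M + rA < n) (hp : 1 ≤ 2 ^ M) (j : Fin n) :
    Dmat n lo M rA rB ⟨lo + 2 ^ M + rA, h2b⟩ j = bval (lo + 2 ^ M + rA) M rB (j : ℕ) := by
  have hvb : ((⟨lo + 2 ^ M + rA, h2b⟩ : Fin n) : ℕ) = lo + 2 ^ M + rA := rfl
  simp only [Dmat, Matrix.of_apply, hvb]
  rw [if_neg (by omega), if_pos (by omega)]

lemma pullB_step (n lo M rA rB : ℕ) (h1 : lo < n)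
    (hPB : (lo + 2 ^ M + rA + 1) + (2 ^ M + rB - 1) ≤ n) :
    (pullsSide n ⟨lo, h1⟩ (lo + 2 ^ M + rA + 1) (2 ^ M + rB - 1) hPB).prod *
      Dmat n lo M rA rB = E1mat n lo M rA rB := by
  have hp : 1 ≤ 2 ^ M := Nat.one_le_two_pow
  have hva : ((⟨lo, h1⟩ : Fin n) : ℕ) = lo := rfl
  rw [pullsSide_prod_mul n ⟨lo, h1⟩ (lo + 2 ^ M + rA + 1) (2 ^ M + rB - 1) hPB
      (Or.inl (by rw [hva]; omega)) (Dmat n lo M rA rB)]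
  ext i j
  simp only [Matrix.of_apply, E1mat]
  by_cases hi : lo + 2 ^ M + rA + 1 ≤ (i : ℕ) ∧ (i : ℕ) < lo + 2 ^ M + rA + 1 + (2 ^ M + rB - 1)
  · rw [if_pos hi, if_pos (by omega), Dmat_a n lo M rA rB h1 hp j]
    have e1 : Dmat n lo M rA rB i j = bval (lo + 2 ^ M + rA) M rB (j : ℕ) := by
      simp only [Dmat, Matrix.of_apply]
      rw [if_neg (by omega), if_pos (by omega)]
    rw [e1]
  · rw [if_neg hi, if_neg (by omega)]

lemma pullA_step (n lo M rA rB : ℕ) (h2b : lo + 2 ^ M + rA < n)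
    (hPA : (lo + 1) + (2 ^ M + rA - 1) ≤ n) :
    (pullsSide n ⟨lo + 2 ^ M + rA, h2b⟩ (lo + 1) (2 ^ M + rA - 1) hPA).prod *
      E1mat n lo M rA rB = E2mat n lo M rA rB := by
  have hp : 1 ≤ 2 ^ M := Nat.one_le_two_pow
  have hvb : ((⟨lo + 2 ^ M + rA, h2b⟩ : Fin n) : ℕ) = lo + 2 ^ M + rA := rfl
  rw [pullsSide_prod_mul n ⟨lo + 2 ^ M + rA, h2b⟩ (lo + 1) (2 ^ M + rA - 1) hPA
      (Or.inr (by rw [hvb]; omega)) (E1mat n lo M rA rB)]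
  ext i j
  simp only [Matrix.of_apply, E2mat]
  by_cases hi : lo + 1 ≤ (i : ℕ) ∧ (i : ℕ) < lo + 1 + (2 ^ M + rA - 1)
  · rw [if_pos hi, if_pos (by omega)]
    have e1 : E1mat n lo M rA rB i j = bval lo M rA (j : ℕ) := by
      simp only [E1mat, Dmat, Matrix.of_apply]
      rw [if_neg (by omega), if_pos (by omega)]
    have e2 : E1mat n lo M rA rB ⟨lo + 2 ^ M + rA, h2b⟩ j
        = bval (lo + 2 ^ M + rA) M rB (j : ℕ) := by
      simp only [E1mat, Matrix.of_apply, hvb]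
      rw [if_neg (by omega), Dmat_b n lo M rA rB h2b hp j]
    rw [e1, e2]
  · rw [if_neg hi, if_neg (by omega)]

lemma final_step (n lo M rA rB : ℕ) (hA : rA ≤ 2 ^ M) (hB : rB ≤ 2 ^ M)
    (hcase : rA = 0 ∨ rB = 2 ^ M)
    (h1 : lo < n) (h2b : lo + 2 ^ M + rA < n) :
    gossipM n ⟨lo, h1⟩ ⟨lo + 2 ^ M + rA, h2b⟩ * E2mat n lo M rA rB
      = tgt n lo (M + 1) (rA + rB) := by
  have hp : 1 ≤ 2 ^ M := Nat.one_le_two_pow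
  have h2 : (2 : ℕ) ^ (M + 1) = 2 ^ M + 2 ^ M := by rw [pow_succ]; omega
  have hva : ((⟨lo, h1⟩ : Fin n) : ℕ) = lo := rfl
  have hvb : ((⟨lo + 2 ^ M + rA, h2b⟩ : Fin n) : ℕ) = lo + 2 ^ M + rA := rfl
  have hE2a : ∀ j : Fin n, E2mat n lo M rA rB ⟨lo, h1⟩ j = bval lo M rA (j : ℕ) := by
    intro j
    simp only [E2mat, E1mat, Matrix.of_apply, hva]
    rw [if_neg (by omega), if_neg (by omega), Dmat_a n lo M rA rB h1 hp j]
  have hE2b : ∀ j : Fin n, E2mat n lo M rA rB ⟨lo + 2 ^ M + rA, h2b⟩ j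
      = bval (lo + 2 ^ M + rA) M rB (j : ℕ) := by
    intro j
    simp only [E2mat, E1mat, Matrix.of_apply, hvb]
    rw [if_neg (by omega), if_neg (by omega), Dmat_b n lo M rA rB h2b hp j]
  ext i j
  rw [gossipM_mul]
  by_cases hia : i = (⟨lo, h1⟩ : Fin n)
  · rw [if_pos hia, hE2a, hE2b, bval_avg lo M rA rB hA hB hcase]
    have hiv : (i : ℕ) = lo := by rw [hia]
    simp only [tgt, Matrix.of_apply]
    rw [if_pos (by omega)]
  · rw [if_neg hia]
    have hiva : (i : ℕ) ≠ lo := fun e => hia (Fin.ext e)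
    by_cases hib : i = (⟨lo + 2 ^ M + rA, h2b⟩ : Fin n)
    · rw [if_pos hib, hE2a, hE2b, bval_avg lo M rA rB hA hB hcase]
      have hiv : (i : ℕ) = lo + 2 ^ M + rA := by rw [hib]
      simp only [tgt, Matrix.of_apply]
      rw [if_pos (by omega)]
    · rw [if_neg hib]
      have hivb : (i : ℕ) ≠ lo + 2 ^ M + rA := fun e => hib (Fin.ext e)
      simp only [E2mat, E1mat, Matrix.of_apply, tgt]
      by_cases hi1 : lo + 1 ≤ (i : ℕ) ∧ (i : ℕ) < lo + 2 ^ M + rA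
      · rw [if_pos hi1, bval_avg lo M rA rB hA hB hcase, if_pos (by omega)]
      · rw [if_neg hi1]
        by_cases hi2 : lo + 2 ^ M + rA + 1 ≤ (i : ℕ) ∧ (i : ℕ) < lo + 2 ^ M + rA + 2 ^ M + rB
        · rw [if_pos hi2, add_comm (bval (lo + 2 ^ M + rA) M rB (j : ℕ)) (bval lo M rA (j : ℕ)),
            bval_avg lo M rA rB hA hB hcase, if_pos (by omega)]
        · rw [if_neg hi2]
          have hblk : ¬(lo ≤ (i : ℕ) ∧ (i : ℕ) < lo + 2 ^ (M + 1) + (rA + rB)) := by omega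
          rw [if_neg hblk]
          simp only [Dmat, Matrix.of_apply]
          rw [if_neg (by omega), if_neg (by omega)]

lemma cross_step (n lo M rA rB : ℕ) (hA : rA ≤ 2 ^ M) (hB : rB ≤ 2 ^ M)
    (hcase : rA = 0 ∨ rB = 2 ^ M)
    (h1 : lo < n) (h2b : lo + 2 ^ M + rA < n)
    (hPA : (lo + 1) + (2 ^ M + rA - 1) ≤ n)
    (hPB : (lo + 2 ^ M + rA + 1) + (2 ^ M + rB - 1) ≤ n) :
    gossipM n ⟨lo, h1⟩ ⟨lo + 2 ^ M + rA, h2b⟩ *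
      ((pullsSide n ⟨lo + 2 ^ M + rA, h2b⟩ (lo + 1) (2 ^ M + rA - 1) hPA).prod *
       ((pullsSide n ⟨lo, h1⟩ (lo + 2 ^ M + rA + 1) (2 ^ M + rB - 1) hPB).prod *
        Dmat n lo M rA rB)) = tgt n lo (M + 1) (rA + rB) := by
  rw [pullB_step n lo M rA rB h1 hPB, pullA_step n lo M rA rB h2b hPA,
    final_step n lo M rA rB hA hB hcase h1 h2b]

lemma tgt_zero_zero (n lo : ℕ) : tgt n lo 0 0 = 1 := by
  ext i j
  simp only [tgt, bval, Matrix.of_apply, Matrix.one_apply, pow_zero, inv_one, Fin.ext_iff]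
  split_ifs <;> first | rfl | omega

lemma tgt_zero_one (n lo : ℕ) (h1 : lo < n) (h2 : lo + 1 < n) :
    gossipM n ⟨lo, h1⟩ ⟨lo + 1, h2⟩ = tgt n lo 0 1 := by
  ext i j
  rw [gossipM_apply]
  have hva : ((⟨lo, h1⟩ : Fin n) : ℕ) = lo := rfl
  have hvb : ((⟨lo + 1, h2⟩ : Fin n) : ℕ) = lo + 1 := rfl
  simp only [tgt, bval, Matrix.of_apply, pow_zero, Fin.ext_iff, hva, hvb]
  split_ifs <;> norm_num <;> omega

lemma main_lemma (n : ℕ) : ∀ (m' : ℕ), ∀ (r' lo : ℕ), r' ≤ 2 ^ m' → lo + 2 ^ m' + r' ≤ n →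
    ∃ L : List (Matrix (Fin n) (Fin n) ℝ),
      (∀ P ∈ L, memAsym n P) ∧
      ((L.map costVal).sum = ((m' * (2 ^ m' + r') + 2 * r' : ℕ) : ℝ)) ∧
      L.prod = tgt n lo m' r' := by
  intro m'
  induction m' with
  | zero =>
    intro r' lo hr hle
    interval_cases r'
    · exact ⟨[], by simp, by simp, by simp [tgt_zero_zero]⟩
    · refine ⟨[gossipM n ⟨lo, by omega⟩ ⟨lo + 1, by omega⟩], ?_, ?_, ?_⟩
      · intro P hP
        simp only [List.mem_singleton] at hP
        exact ⟨_, _, Or.inl hP⟩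
      · rw [List.map_singleton, List.sum_singleton,
          costVal_gossipM _ _ (by intro e; have := congrArg Fin.val e; simp at this)]
        norm_num
      · rw [List.prod_singleton]
        exact tgt_zero_one n lo _ _
  | succ M ih =>
    intro r' lo hr hle
    have hp : 1 ≤ 2 ^ M := Nat.one_le_two_pow
    have h2 : (2 : ℕ) ^ (M + 1) = 2 ^ M + 2 ^ M := by rw [pow_succ]; omega
    set rB := min r' (2 ^ M) with hrB
    set rA := r' - rB with hrA
    have hcase : rA = 0 ∨ rB = 2 ^ M := by omega
    have hrAB : rA + rB = r' := by omega
    have hA : rA ≤ 2 ^ M := by omega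
    have hB : rB ≤ 2 ^ M := by omega
    obtain ⟨LA, hA1, hA2, hA3⟩ := ih rA lo hA (by omega)
    obtain ⟨LB, hB1, hB2, hB3⟩ := ih rB (lo + 2 ^ M + rA) hB (by omega)
    have h1 : lo < n := by omega
    have h2b : lo + 2 ^ M + rA < n := by omega
    have hPA : (lo + 1) + (2 ^ M + rA - 1) ≤ n := by omega
    have hPB : (lo + 2 ^ M + rA + 1) + (2 ^ M + rB - 1) ≤ n := by omega
    refine ⟨gossipM n ⟨lo, h1⟩ ⟨lo + 2 ^ M + rA, h2b⟩ ::
      ((pullsSide n ⟨lo + 2 ^ M + rA, h2b⟩ (lo + 1) (2 ^ M + rA - 1) hPA) ++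
       ((pullsSide n ⟨lo, h1⟩ (lo + 2 ^ M + rA + 1) (2 ^ M + rB - 1) hPB) ++
        (LB ++ LA))), ?_, ?_, ?_⟩
    · intro P hP
      simp only [List.mem_cons, List.mem_append] at hP
      rcases hP with hP | hP | (hP | (hP | hP))
      · exact ⟨_, _, Or.inl hP⟩
      · obtain ⟨c, hc⟩ := pullsSide_mem n _ _ _ _ P hP
        exact ⟨_, _, Or.inr hc⟩
      · obtain ⟨c, hc⟩ := pullsSide_mem n _ _ _ _ P hP
        exact ⟨_, _, Or.inr hc⟩
      · exact hB1 P hP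
      · exact hA1 P hP
    · rw [List.map_cons, List.sum_cons, List.map_append, List.sum_append,
        List.map_append, List.sum_append, List.map_append, List.sum_append]
      rw [costVal_gossipM _ _ (by intro e; have := congrArg Fin.val e; simp at this; omega)]
      rw [pullsSide_cost n _ _ _ _ (Or.inr (by show lo + 1 + (2 ^ M + rA - 1) ≤ lo + 2 ^ M + rA; omega))]
      rw [pullsSide_cost n _ _ _ _ (Or.inl (by show lo < lo + 2 ^ M + rA + 1; omega))]
      rw [hA2, hB2]
      have c1 : ((2 ^ M + rA - 1 : ℕ) : ℝ) = (2 ^ M + rA : ℝ) - 1 := by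
        have h' : (1:ℕ) ≤ 2 ^ M + rA := by omega
        push_cast [h']
        ring
      have c2 : ((2 ^ M + rB - 1 : ℕ) : ℝ) = (2 ^ M + rB : ℝ) - 1 := by
        have h' : (1:ℕ) ≤ 2 ^ M + rB := by omega
        push_cast [h']
        ring
      have cr : (r' : ℝ) = (rA : ℝ) + (rB : ℝ) := by exact_mod_cast hrAB.symm
      rw [c1, c2]
      push_cast
      rw [cr]
      ring
    · rw [List.prod_cons, List.prod_append, List.prod_append, List.prod_append, hA3, hB3,
        tgt_mul_tgt n lo M rA rB,
        pullB_step n lo M rA rB h1 hPB, pullA_step n lo M rA rB h2b hPA,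
        final_step n lo M rA rB hA hB hcase h1 h2b, hrAB]

theorem stmt_11 (m r n : ℕ) (hm : 1 ≤ m) (hr : r < 2 ^ m) (hn : n = 2 ^ m + r) :
    ∃ t : ℕ, 1 ≤ t ∧ ∃ P : Fin t → Matrix (Fin n) (Fin n) ℝ,
      (∀ k, memAsym n (P k)) ∧
      (∑ k, ∑ i, ∑ j, |(1 - P k) i j|) = ((m * n + 2 * r : ℕ) : ℝ) ∧
      (List.ofFn P).reverse.prod =
        vecMulVec (fun _ : Fin n => (1 : ℝ))
          (fun i : Fin n => if (i : ℕ) < n - 2 * r then (1 / 2 ^ m : ℝ) else 1 / 2 ^ (m + 1)) := by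
  subst hn
  have hp : 1 ≤ 2 ^ m := Nat.one_le_two_pow
  have h0 : 0 < 2 ^ m + r := by omega
  obtain ⟨L, hmem, hcost, hprod⟩ := main_lemma (2 ^ m + r) m r 0 (le_of_lt hr) (by omega)
  refine ⟨(L ++ [gossipM (2 ^ m + r) ⟨0, h0⟩ ⟨0, h0⟩]).reverse.length, by simp,
    (L ++ [gossipM (2 ^ m + r) ⟨0, h0⟩ ⟨0, h0⟩]).reverse.get, ?_, ?_, ?_⟩
  · intro k
    have hk : (L ++ [gossipM (2 ^ m + r) ⟨0, h0⟩ ⟨0, h0⟩]).reverse.get k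
        ∈ (L ++ [gossipM (2 ^ m + r) ⟨0, h0⟩ ⟨0, h0⟩]).reverse := List.get_mem _ k
    rw [List.mem_reverse, List.mem_append] at hk
    rcases hk with h | h
    · exact hmem _ h
    · simp only [List.mem_singleton] at h
      exact ⟨_, _, Or.inl h⟩
  · have hdef : (∑ k, ∑ i, ∑ j, |(1 - (L ++ [gossipM (2 ^ m + r) ⟨0, h0⟩ ⟨0, h0⟩]).reverse.get k) i j|)
        = ∑ k, costVal ((L ++ [gossipM (2 ^ m + r) ⟨0, h0⟩ ⟨0, h0⟩]).reverse.get k) := rfl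
    rw [hdef]
    have h1 : ∑ k, costVal ((L ++ [gossipM (2 ^ m + r) ⟨0, h0⟩ ⟨0, h0⟩]).reverse.get k)
        = ((List.ofFn ((L ++ [gossipM (2 ^ m + r) ⟨0, h0⟩ ⟨0, h0⟩]).reverse.get)).map costVal).sum := by
      rw [List.map_ofFn, List.sum_ofFn]
      rfl
    rw [h1, List.ofFn_get, List.map_reverse, List.sum_reverse, List.map_append,
      List.sum_append, hcost, List.map_singleton, List.sum_singleton, costVal_gossipM_self]
    norm_num
  · rw [List.ofFn_get, List.reverse_reverse, List.prod_append, List.prod_singleton,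
      gossipM_self, mul_one, hprod]
    ext i j
    simp only [tgt, bval, Matrix.of_apply, vecMulVec_apply, one_mul]
    rw [if_pos (by omega), if_pos (by omega)]
    by_cases ht : (j : ℕ) + r < 0 + 2 ^ m
    · rw [if_pos ht, if_pos (by omega), one_div]
    · rw [if_neg ht, if_neg (by omega), one_div]
end

section
/- Let n = 2^m + r with integers m ≥ 0 and 0 ≤ r < 2^m. Let F be the set of vectors f = (f_1, …, f_n) of rational numbers with Σ_{i=1}^n f_i = 1 such that each f_i can be written as f_i = b_i/2^{c_i} with b_i an odd nonnegative integer and c_i a nonnegative integer (so each f_i is a positive dyadic rational). For f ∈ F and 1 ≤ i ≤ n, let χ_i(f) be the least integer d with f_i ≥ 1/2^d. Then min_{f ∈ F} Σ_{i=1}^n χ_i(f) = m·n + 2r. -/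
-- tangent line inequality: for every integer x, m+2 - 2^(m+1)·2^(-x) ≤ x
lemma tangent_ineq (m : ℕ) (x : ℤ) :
    (m : ℚ) + 2 - 2 ^ (m + 1) * (2 : ℚ) ^ (-x) ≤ (x : ℚ) := by
  have h2 : (0:ℚ) < 2 := by norm_num
  rcases le_or_gt x ((m : ℤ) + 1) with h | h
  · set k := ((m:ℤ) + 1 - x).toNat with hkdef
    have hke : ((m:ℤ) + 1 - x) = (k : ℤ) := (Int.toNat_of_nonneg (by omega)).symm
    have hkk : (k : ℚ) + 1 ≤ 2 ^ k := by exact_mod_cast (Nat.lt_two_pow_self (n := k))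
    have hz : (2:ℚ) ^ (m + 1) * (2:ℚ) ^ (-x) = 2 ^ k := by
      have : (2:ℚ) ^ (m + 1) = (2:ℚ) ^ ((m:ℤ) + 1) := by
        rw [← zpow_natCast]; norm_num
      rw [this, ← zpow_add₀ (by norm_num : (2:ℚ) ≠ 0),
        show (m:ℤ) + 1 + -x = (k:ℤ) by omega, zpow_natCast]
    rw [hz]
    have hx : (x : ℚ) = (m : ℚ) + 1 - k := by
      have : (x : ℚ) = ((x : ℤ) : ℚ) := by norm_cast
      rw [this, show (x : ℤ) = (m : ℤ) + 1 - k by omega]; push_cast; ring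
    rw [hx]; linarith
  · have hx : (m : ℚ) + 2 ≤ (x : ℚ) := by exact_mod_cast (by omega : (m:ℤ) + 2 ≤ x)
    have : (0:ℚ) < 2 ^ (m + 1) * (2 : ℚ) ^ (-x) :=
      mul_pos (by positivity) (zpow_pos h2 _)
    linarith

lemma chi_least (c : ℕ) : IsLeast { d : ℤ | (1 : ℚ) / 2 ^ d ≤ 1 / 2 ^ c } (c : ℤ) := by
  constructor
  · simp only [Set.mem_setOf_eq, zpow_natCast]; norm_num
  · intro d hd
    simp only [Set.mem_setOf_eq] at hd
    by_contra hlt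
    push_neg at hlt
    have : (1:ℚ)/2^(c:ℤ) < 1/2^d := by
      apply one_div_lt_one_div_of_lt
      · positivity
      · exact zpow_lt_zpow_right₀ (by norm_num) hlt
    rw [show ((2:ℚ))^(c:ℤ) = 2^c from zpow_natCast 2 c] at this
    linarith

theorem stmt_12 (m r n : ℕ) (hr : r < 2 ^ m) (hn : n = 2 ^ m + r) :
    IsLeast
      { s : ℤ | ∃ f : Fin n → ℚ,
          (∑ i, f i) = 1 ∧
          (∀ i, ∃ b c : ℕ, Odd b ∧ f i = (b : ℚ) / 2 ^ c) ∧
          ∃ χ : Fin n → ℤ,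
            (∀ i, IsLeast { d : ℤ | (1 : ℚ) / 2 ^ d ≤ f i } (χ i)) ∧
            s = ∑ i, χ i }
      ((m * n + 2 * r : ℕ) : ℤ) := by
  have h2rn : 2 * r ≤ n := by omega
  constructor
  · -- membership
    refine ⟨fun i => if (i : ℕ) < 2 * r then 1 / 2 ^ (m + 1) else 1 / 2 ^ m, ?_, ?_, ?_⟩
    · -- sum = 1
      rw [Fin.sum_univ_eq_sum_range (fun i => if i < 2 * r then (1:ℚ) / 2 ^ (m+1) else 1 / 2 ^ m)]
      rw [Finset.sum_ite]
      have hf1 : Finset.filter (fun i => i < 2 * r) (Finset.range n) = Finset.range (2 * r) := by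
        ext i; simp only [Finset.mem_filter, Finset.mem_range]; omega
      have hf2 : (Finset.filter (fun i => ¬ i < 2 * r) (Finset.range n)).card = n - 2 * r := by
        have := Finset.card_filter_add_card_filter_not
          (s := Finset.range n) (p := fun i => i < 2 * r)
        rw [hf1] at this
        simp only [Finset.card_range] at this ⊢
        omega
      rw [Finset.sum_const, Finset.sum_const, hf1, hf2, Finset.card_range]
      have hcast : ((n - 2 * r : ℕ) : ℚ) = (n : ℚ) - 2 * r := by
        push_cast [h2rn]; ring
      rw [nsmul_eq_mul, nsmul_eq_mul, hcast]
      have hnq : (n : ℚ) = 2 ^ m + r := by exact_mod_cast congrArg (Nat.cast : ℕ → ℚ) hn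
      rw [hnq]
      have : (2:ℚ) ^ (m + 1) = 2 * 2 ^ m := by ring
      field_simp [this]
      push_cast
      ring
    · -- dyadic
      intro i
      by_cases h : (i : ℕ) < 2 * r
      · exact ⟨1, m + 1, odd_one, by simp [h]⟩
      · exact ⟨1, m, odd_one, by simp [h]⟩
    · -- χ
      refine ⟨fun i => if (i : ℕ) < 2 * r then ((m : ℤ) + 1) else (m : ℤ), ?_, ?_⟩
      · intro i
        by_cases h : (i : ℕ) < 2 * r
        · simpa [h] using chi_least (m + 1)
        · simpa [h] using chi_least m
      · rw [Fin.sum_univ_eq_sum_range (fun i => if i < 2 * r then ((m : ℤ) + 1) else (m : ℤ))]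
        rw [Finset.sum_ite]
        have hf1 : Finset.filter (fun i => i < 2 * r) (Finset.range n) = Finset.range (2 * r) := by
          ext i; simp only [Finset.mem_filter, Finset.mem_range]; omega
        have hf2 : (Finset.filter (fun i => ¬ i < 2 * r) (Finset.range n)).card = n - 2 * r := by
          have := Finset.card_filter_add_card_filter_not
            (s := Finset.range n) (p := fun i => i < 2 * r)
          rw [hf1] at this
          simp only [Finset.card_range] at this ⊢
          omega
        rw [Finset.sum_const, Finset.sum_const, hf1, hf2, Finset.card_range]
        rw [nsmul_eq_mul, nsmul_eq_mul]
        have : ((n - 2 * r : ℕ) : ℤ) = (n : ℤ) - 2 * r := by push_cast [h2rn]; ring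
        rw [this]
        push_cast
        subst hn
        push_cast
        ring
  · -- lower bound
    rintro s ⟨f, hsum, hdyad, χ, hχ, rfl⟩
    have hfle : ∀ i, (2 : ℚ) ^ (-(χ i)) ≤ f i := by
      intro i
      have := (hχ i).1
      simpa [one_div, zpow_neg] using this
    have hsum2 : ∑ i, (2 : ℚ) ^ (-(χ i)) ≤ 1 := by
      rw [← hsum]; exact Finset.sum_le_sum fun i _ => hfle i
    have key : ∀ i : Fin n, (m : ℚ) + 2 - 2 ^ (m + 1) * (2 : ℚ) ^ (-(χ i)) ≤ (χ i : ℚ) :=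
      fun i => tangent_ineq m (χ i)
    have hQ : ((m * n + 2 * r : ℕ) : ℚ) ≤ ∑ i, (χ i : ℚ) := by
      have h1 : ∑ i : Fin n, ((m : ℚ) + 2 - 2 ^ (m + 1) * (2 : ℚ) ^ (-(χ i))) ≤
          ∑ i, (χ i : ℚ) := Finset.sum_le_sum fun i _ => key i
      rw [Finset.sum_sub_distrib, Finset.sum_const, ← Finset.mul_sum] at h1
      have hcard : (Finset.univ : Finset (Fin n)).card = n := by simp
      rw [hcard, nsmul_eq_mul] at h1
      have h3 : (n : ℚ) * ((m : ℚ) + 2) - 2 ^ (m + 1) * 1 ≤ ∑ i, (χ i : ℚ) := by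
        have hpos : (0:ℚ) < 2 ^ (m+1) := by positivity
        nlinarith [hsum2]
      have : ((m * n + 2 * r : ℕ) : ℚ) = (n : ℚ) * ((m : ℚ) + 2) - 2 ^ (m + 1) := by
        subst hn; push_cast; ring
      rw [this]
      linarith [h3]
    have : (((m * n + 2 * r : ℕ) : ℤ) : ℚ) ≤ ((∑ i, χ i : ℤ) : ℚ) := by
      push_cast at hQ ⊢
      convert hQ using 2 <;> norm_cast
    exact_mod_cast this
end

section
/- Let n ≥ 3 and identify linear operators on the n-qubit space (ℂ²)^{⊗n} with 2^n × 2^n complex matrices indexed by functions q : {1,…,n} → {0,1}, with U_π the permutation matrix determined by U_π e_q = e_{q∘π} for each permutation π of {1,…,n}. Then for every sequence of index pairs (i_k, j_k) ∈ {1,…,n}², k = 0, 1, 2, …, with τ_k the transposition of i_k and j_k, there exists a density matrix ρ_0 (a Hermitian, positive semidefinite 2^n × 2^n complex matrix of trace 1) such that the quantum gossip iterates defined by ρ(0) = ρ_0 and ρ(k+1) = (1/2) ρ(k) + (1/2) U_{τ_k} ρ(k) U_{τ_k}† satisfy ρ(T) ≠ (1/n!) Σ_{π ∈ S_n} U_π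 ρ_0 U_π† for every integer T ≥ 0; that is, quantum gossiping never achieves global finite-time convergence to the symmetric state on a nontrivial quantum network. -/
open Matrix ComplexOrder

/-- The permutation (unitary) matrix on `(ℂ²)^{⊗n}` determined by `U_π e_q = e_{q ∘ π}`,
with the computational basis indexed by functions `q : Fin n → Fin 2`. -/
def Uperm (n : ℕ) (π : Equiv.Perm (Fin n)) :
    Matrix (Fin n → Fin 2) (Fin n → Fin 2) ℂ :=
  Matrix.of fun p q => if p = q ∘ π then 1 else 0

lemma Uperm_mul_apply {n : ℕ} (π : Equiv.Perm (Fin n))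
    (A : Matrix (Fin n → Fin 2) (Fin n → Fin 2) ℂ) (p s : Fin n → Fin 2) :
    (Uperm n π * A) p s = A (p ∘ ⇑π⁻¹) s := by
  simp only [Matrix.mul_apply, Uperm, Matrix.of_apply, ite_mul, one_mul, zero_mul]
  rw [Finset.sum_eq_single (p ∘ ⇑π⁻¹)]
  · rw [if_pos]; ext x; simp
  · intro q _ hq
    rw [if_neg]
    intro h
    apply hq
    ext x
    simp [h]
  · intro h; exact absurd (Finset.mem_univ _) h

lemma mul_Uperm_conjT_apply {n : ℕ} (π : Equiv.Perm (Fin n))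
    (A : Matrix (Fin n → Fin 2) (Fin n → Fin 2) ℂ) (p s : Fin n → Fin 2) :
    (A * (Uperm n π)ᴴ) p s = A p (s ∘ ⇑π⁻¹) := by
  simp only [Matrix.mul_apply, Uperm, Matrix.conjTranspose_apply, Matrix.of_apply]
  have : ∀ r : Fin n → Fin 2, star (if s = r ∘ ⇑π then (1:ℂ) else 0)
      = if s = r ∘ ⇑π then 1 else 0 := by
    intro r; split <;> simp
  simp only [this, mul_ite, mul_one, mul_zero]
  rw [Finset.sum_eq_single (s ∘ ⇑π⁻¹)]
  · rw [if_pos]; ext x; simp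
  · intro q _ hq
    rw [if_neg]
    intro h
    apply hq
    ext x
    simp [h]
  · intro h; exact absurd (Finset.mem_univ _) h

lemma conj_apply {n : ℕ} (π : Equiv.Perm (Fin n))
    (A : Matrix (Fin n → Fin 2) (Fin n → Fin 2) ℂ) (p s : Fin n → Fin 2) :
    (Uperm n π * A * (Uperm n π)ᴴ) p s = A (p ∘ ⇑π⁻¹) (s ∘ ⇑π⁻¹) := by
  rw [mul_Uperm_conjT_apply, Uperm_mul_apply]

/-- Permutations respecting a predicate decompose as a product of permutations. -/
def stabEquiv {α : Type*} [Fintype α] [DecidableEq α] (p : α → Prop) [DecidablePred p] :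
    {π : Equiv.Perm α // ∀ x, p x ↔ p (π x)} ≃
      Equiv.Perm {x // p x} × Equiv.Perm {x // ¬ p x} where
  toFun π := (π.1.subtypePerm (fun x => (π.2 x).symm), π.1.subtypePerm (fun x => not_congr (π.2 x).symm))
  invFun σ := ⟨Equiv.Perm.subtypeCongr σ.1 σ.2, by
    intro x
    by_cases h : p x
    · simp [Equiv.Perm.subtypeCongr.left_apply _ _ h, h, (σ.1 ⟨x, h⟩).2]
    · simp [Equiv.Perm.subtypeCongr.right_apply _ _ h, h, (σ.2 ⟨x, h⟩).2]⟩
  left_inv π := by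
    ext a
    by_cases h : p a
    · simp [Equiv.Perm.subtypeCongr.left_apply _ _ h, Equiv.Perm.subtypePerm]
    · simp [Equiv.Perm.subtypeCongr.right_apply _ _ h, Equiv.Perm.subtypePerm]
  right_inv σ := by
    ext a
    · simp [Equiv.Perm.subtypePerm, Equiv.Perm.subtypeCongr.left_apply _ _ a.2]
    · simp [Equiv.Perm.subtypePerm, Equiv.Perm.subtypeCongr.right_apply _ _ a.2]

def q0fun (n : ℕ) : Fin n → Fin 2 := fun i => if (i : ℕ) < 2 then 1 else 0

lemma q0fun_eq_one_iff {n : ℕ} (x : Fin n) : q0fun n x = 1 ↔ (x : ℕ) < 2 := by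
  unfold q0fun; split <;> simp_all

lemma card_stab {n : ℕ} (hn : 3 ≤ n) :
    Fintype.card {π : Equiv.Perm (Fin n) // ∀ x, q0fun n x = 1 ↔ q0fun n (π x) = 1}
      = 2 * (n - 2).factorial := by
  rw [Fintype.card_congr (stabEquiv (fun x => q0fun n x = 1))]
  have h1 : Fintype.card {x : Fin n // q0fun n x = 1} = 2 := by
    have e : {x : Fin n // q0fun n x = 1} ≃ Fin 2 :=
      { toFun := fun x => ⟨x.1, (q0fun_eq_one_iff x.1).mp x.2⟩
        invFun := fun y => ⟨⟨y.1, lt_of_lt_of_le y.2 (by omega)⟩,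
          (q0fun_eq_one_iff _).mpr y.2⟩
        left_inv := fun x => by ext; rfl
        right_inv := fun y => by ext; rfl }
    simp [Fintype.card_congr e]
  have h2 : Fintype.card {x : Fin n // ¬ q0fun n x = 1} = n - 2 := by
    rw [Fintype.card_subtype_compl, h1, Fintype.card_fin]
  rw [Fintype.card_prod, Fintype.card_perm, Fintype.card_perm, h1, h2]
  norm_num [Nat.factorial]

lemma fin2_eq_iff (a b : Fin 2) : a = b ↔ (b = 1 ↔ a = 1) := by
  fin_cases a <;> fin_cases b <;> simp

theorem stmt_17 (n : ℕ) (hn : 3 ≤ n) (pair : ℕ → Fin n × Fin n) :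
    ∃ ρ0 : Matrix (Fin n → Fin 2) (Fin n → Fin 2) ℂ,
      ρ0.PosSemidef ∧ ρ0.trace = 1 ∧
      ∀ ρ : ℕ → Matrix (Fin n → Fin 2) (Fin n → Fin 2) ℂ,
        ρ 0 = ρ0 →
        (∀ k, ρ (k + 1) = (1 / 2 : ℂ) • ρ k +
          (1 / 2 : ℂ) • (Uperm n (Equiv.swap (pair k).1 (pair k).2) * ρ k *
            (Uperm n (Equiv.swap (pair k).1 (pair k).2))ᴴ)) →
        ∀ T : ℕ, ρ T ≠
          ((n.factorial : ℂ))⁻¹ •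
            ∑ π : Equiv.Perm (Fin n), Uperm n π * ρ0 * (Uperm n π)ᴴ := by
  classical
  set q0 : Fin n → Fin 2 := q0fun n with hq0
  refine ⟨Matrix.of fun p q => if p = q0 ∧ q = q0 then 1 else 0, ?_, ?_, ?_⟩
  · rw [Matrix.posSemidef_iff_dotProduct_mulVec]
    constructor
    · ext p q
      simp only [Matrix.conjTranspose_apply, Matrix.of_apply]
      by_cases h : q = q0 ∧ p = q0
      · rw [if_pos h, if_pos ⟨h.2, h.1⟩]; simp
      · rw [if_neg h, if_neg (fun h' => h ⟨h'.2, h'.1⟩)]; simp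
    · intro x
      have hmv : ∀ p, (Matrix.of fun p q => if p = q0 ∧ q = q0 then (1:ℂ) else 0).mulVec x p
          = if p = q0 then x q0 else 0 := by
        intro p
        simp only [Matrix.mulVec, dotProduct, Matrix.of_apply]
        by_cases h : p = q0
        · simp only [h, true_and, ite_mul, one_mul, zero_mul]
          rw [Finset.sum_ite_eq' Finset.univ q0 x]
          simp
        · simp [h]
      have : star x ⬝ᵥ (Matrix.of fun p q => if p = q0 ∧ q = q0 then (1:ℂ) else 0).mulVec x
          = star (x q0) * x q0 := by
        simp only [dotProduct, Pi.star_apply, hmv, mul_ite, mul_zero]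
        rw [Finset.sum_ite_eq' Finset.univ q0 (fun p => star (x p) * x q0)]
        simp
      rw [this]
      exact star_mul_self_nonneg _
  · simp only [Matrix.trace, Matrix.diag, Matrix.of_apply, and_self]
    rw [Finset.sum_ite_eq' Finset.univ q0 (fun _ => (1:ℂ))]
    simp
  · intro ρ h0 hstep T heq
    -- dyadic invariant
    have key : ∀ k p q, ∃ m : ℕ, ρ k p q = (m : ℂ) / 2 ^ k := by
      intro k
      induction k with
      | zero =>
        intro p q
        rw [h0]
        by_cases h : p = q0 ∧ q = q0
        · exact ⟨1, by simp [h]⟩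
        · exact ⟨0, by simp [Matrix.of_apply, h]⟩
      | succ k ih =>
        intro p q
        set τ := Equiv.swap (pair k).1 (pair k).2
        obtain ⟨m1, h1⟩ := ih p q
        obtain ⟨m2, h2⟩ := ih (p ∘ ⇑τ⁻¹) (q ∘ ⇑τ⁻¹)
        refine ⟨m1 + m2, ?_⟩
        simp only [τ] at h2
        rw [hstep k]
        simp only [Matrix.add_apply, Matrix.smul_apply, conj_apply, smul_eq_mul, h1, h2]
        have h2k : (2 : ℂ) ^ k ≠ 0 := by positivity
        rw [pow_succ]
        push_cast
        rw [div_mul_eq_div_div, add_div]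
        ring
    -- evaluate the symmetric state entry at (q0, q0)
    have hterm : ∀ π : Equiv.Perm (Fin n),
        (Uperm n π * (Matrix.of fun p q => if p = q0 ∧ q = q0 then (1:ℂ) else 0)
          * (Uperm n π)ᴴ) q0 q0 = if q0 ∘ ⇑π⁻¹ = q0 then 1 else 0 := by
      intro π
      rw [conj_apply]
      simp [and_self]
    have hsum : (∑ π : Equiv.Perm (Fin n), Uperm n π
          * (Matrix.of fun p q => if p = q0 ∧ q = q0 then (1:ℂ) else 0)
          * (Uperm n π)ᴴ) q0 q0
        = (2 * (n - 2).factorial : ℕ) := by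
      rw [Matrix.sum_apply]
      simp only [hterm]
      rw [Finset.sum_boole]
      have hcard : (Finset.univ.filter fun π : Equiv.Perm (Fin n) => q0 ∘ ⇑π⁻¹ = q0).card
          = 2 * (n - 2).factorial := by
        rw [← Fintype.card_subtype]
        rw [← card_stab hn]
        apply Fintype.card_congr
        refine Equiv.subtypeEquiv (Equiv.inv (Equiv.Perm (Fin n))) ?_
        intro π
        rw [funext_iff]
        exact forall_congr' fun x => fin2_eq_iff _ _
      rw [hcard]
    have hfact : (n.factorial : ℂ) ≠ 0 := by
      exact_mod_cast Nat.cast_ne_zero.mpr (Nat.factorial_ne_zero n)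
    obtain ⟨m, hm⟩ := key T q0 q0
    have hentry : (m : ℂ) / 2 ^ T = (↑(2 * (n - 2).factorial)) / (n.factorial : ℂ) := by
      have := congrArg (fun M => M q0 q0) heq
      simp only [Matrix.smul_apply, smul_eq_mul] at this
      rw [hm] at this
      rw [this, hsum]
      ring
    -- derive the natural-number equation
    have h2T : (2 : ℂ) ^ T ≠ 0 := by positivity
    have hnat : m * n.factorial = 2 * (n - 2).factorial * 2 ^ T := by
      have : (m : ℂ) * n.factorial = 2 * (n - 2).factorial * 2 ^ T := by
        field_simp at hentry
        rw [mul_comm _ ((2:ℂ) ^ T)]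
        exact_mod_cast hentry
      exact_mod_cast this
    -- arithmetic contradiction
    obtain ⟨k, rfl⟩ : ∃ k, n = k + 3 := ⟨n - 3, by omega⟩
    have hfac : (k + 3).factorial = (k + 3) * ((k + 2) * (k + 1).factorial) := by
      simp [Nat.factorial]
    have hsub : k + 3 - 2 = k + 1 := by omega
    rw [hfac, hsub] at hnat
    have hkey : m * ((k + 3) * (k + 2)) = 2 ^ (T + 1) := by
      have hpos : 0 < (k + 1).factorial := Nat.factorial_pos _
      have : m * ((k + 3) * (k + 2)) * (k + 1).factorial
          = 2 ^ (T + 1) * (k + 1).factorial := by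
        rw [pow_succ]
        ring_nf
        ring_nf at hnat
        linarith [hnat]
      exact Nat.eq_of_mul_eq_mul_right hpos this
    have hdvd : (k + 3) * (k + 2) ∣ 2 ^ (T + 1) := Dvd.intro_left m hkey
    rcases Nat.even_or_odd k with hk | hk
    · have hodd : Odd (k + 3) := by rcases hk with ⟨j, rfl⟩; exact ⟨j + 1, by ring⟩
      have hd : (k + 3) ∣ 2 ^ (T + 1) := (dvd_mul_right _ _).trans hdvd
      have hco : Nat.Coprime (k + 3) (2 ^ (T + 1)) :=
        Nat.Coprime.pow_right _ (hodd.coprime_two_right)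
      have := Nat.gcd_eq_left hd
      rw [hco] at this
      omega
    · have hodd : Odd (k + 2) := by rcases hk with ⟨j, rfl⟩; exact ⟨j + 1, by ring⟩
      have hd : (k + 2) ∣ 2 ^ (T + 1) := (dvd_mul_left _ _).trans hdvd
      have hco : Nat.Coprime (k + 2) (2 ^ (T + 1)) :=
        Nat.Coprime.pow_right _ (hodd.coprime_two_right)
      have := Nat.gcd_eq_left hd
      rw [hco] at this
      omega
end
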